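/- Let X be a random variable with continuous CDF F, threshold u with F(u) < 1, and suppose the excess distribution satisfies F_u(y) = G_{ξ,σ}(y) exactly for some 0 < ξ < 1, σ > 0 and all y ≥ 0. Then for α ∈ (F(u),1), CVaR_α(X) = u + (σ/(1-ξ))(1 + (s^ξ - 1)/ξ), where s = (1 - F(u))/(1 - α). -/

import Mathlib

open Set Real MeasureTheory

/-- Let X be a random variable with continuous CDF F, let u be a threshold with F(u) < 1,
and suppose the excess distribution is exactly GPD:
`(F(y+u) - F(u))/(1 - F(u)) = 1 - (1 + ξy/σ)^(-1/ξ)` for all y ≥ 0, with 0 < ξ < 1, σ > 0.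
Then for α ∈ (F(u), 1), `CVaR_α(X) = E[X | X ≥ q_α] = u + (σ/(1-ξ))(1 + (s^ξ - 1)/ξ)`,
where `s = (1 - F(u))/(1 - α)` and `q_α = inf {x : F(x) ≥ α}`. -/
theorem cvar_pot_formula {Ω : Type*} [MeasurableSpace Ω] (μ : Measure Ω)
    [IsProbabilityMeasure μ] (X : Ω → ℝ) (hX : Measurable X)
    (ξ σ u α : ℝ) (hξ0 : 0 < ξ) (hξ1 : ξ < 1) (hσ : 0 < σ)
    (F : ℝ → ℝ) (hF : F = fun x => (μ {ω | X ω ≤ x}).toReal)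
    (hFcont : Continuous F) (hFu : F u < 1)
    (hexcess : ∀ y : ℝ, 0 ≤ y →
      (F (y + u) - F u) / (1 - F u) = 1 - (1 + ξ * y / σ) ^ (-1/ξ))
    (hα0 : F u < α) (hα1 : α < 1) :
    (∫ ω in {ω | sInf {x : ℝ | α ≤ F x} ≤ X ω}, X ω ∂μ) / (1 - α)
      = u + (σ / (1 - ξ)) * (1 + (((1 - F u) / (1 - α)) ^ ξ - 1) / ξ) := by
  have h1α : (0:ℝ) < 1 - α := by linarith
  have h1ξ : (0:ℝ) < 1 - ξ := by linarith
  have hneg : -1/ξ < 0 := div_neg_of_neg_of_pos (by norm_num) hξ0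
  set p : ℝ := 1 - F u with hpdef
  have hp : 0 < p := by rw [hpdef]; linarith
  set s : ℝ := p / (1 - α) with hsdef
  have hs0 : 0 < s := div_pos hp h1α
  have hs1 : 1 < s := by
    rw [hsdef, one_lt_div h1α, hpdef]
    linarith
  set A : ℝ := s ^ ξ with hAdef
  have hA1 : 1 < A := by
    rw [hAdef]
    exact (Real.one_lt_rpow_iff_of_pos hs0).mpr (Or.inl ⟨hs1, hξ0⟩)
  have hA0 : 0 < A := lt_trans one_pos hA1
  set q : ℝ := u + σ / ξ * (A - 1) with hqdef
  have hqu : u ≤ q := by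
    rw [hqdef]
    have : 0 ≤ σ / ξ * (A - 1) := mul_nonneg (by positivity) (by linarith)
    linarith
  -- Monotonicity of F
  have Fmono : Monotone F := by
    intro a b hab
    rw [hF]
    exact ENNReal.toReal_mono (measure_ne_top μ _)
      (measure_mono fun ω (h : X ω ≤ a) => le_trans h hab)
  have Fnn : ∀ x, 0 ≤ F x := fun x => by rw [hF]; exact ENNReal.toReal_nonneg
  -- Tail formula
  have tail : ∀ x, u ≤ x → F x = 1 - p * (1 + ξ * (x - u) / σ) ^ (-1/ξ) := by
    intro x hx
    have h := hexcess (x - u) (by linarith)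
    have hxu : x - u + u = x := by ring
    rw [hxu] at h
    have h2 := (div_eq_iff hp.ne').mp h
    linear_combination h2 + hpdef
  have hbaseq : 1 + ξ * (q - u) / σ = A := by
    rw [hqdef]
    field_simp
    ring
  have hFq : F q = α := by
    rw [tail q hqu, hbaseq]
    have hAs : A ^ (-1/ξ) = 1 / s := by
      rw [hAdef, ← Real.rpow_mul hs0.le, show ξ * (-1/ξ) = -1 by field_simp,
        Real.rpow_neg_one, one_div]
    rw [hAs]
    have : p * (1 / s) = 1 - α := by rw [hsdef]; field_simp
    linarith
  -- F x < α for x < q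
  have hFlt : ∀ x, x < q → F x < α := by
    intro x hx
    rcases lt_or_ge x u with h | h
    · exact lt_of_le_of_lt (Fmono h.le) hα0
    · rw [tail x h]
      have hb0 : (0:ℝ) < 1 + ξ * (x - u) / σ := by
        have : 0 ≤ ξ * (x - u) / σ := div_nonneg (mul_nonneg hξ0.le (by linarith)) hσ.le
        linarith
      have hb : 1 + ξ * (x - u) / σ < A := by
        rw [← hbaseq]
        gcongr
      have hr : A ^ (-1/ξ) < (1 + ξ * (x - u) / σ) ^ (-1/ξ) :=
        Real.rpow_lt_rpow_of_neg hb0 hb hneg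
      have hmul : p * A ^ (-1/ξ) < p * (1 + ξ * (x - u) / σ) ^ (-1/ξ) :=
        mul_lt_mul_of_pos_left hr hp
      have hq' : α = 1 - p * A ^ (-1/ξ) := by rw [← hFq, tail q hqu, hbaseq]
      linarith
  -- the quantile
  have hqmem : α ≤ F q := le_of_eq hFq.symm
  have hlb : ∀ x ∈ {x : ℝ | α ≤ F x}, q ≤ x := by
    intro x hx
    by_contra h
    push_neg at h
    exact absurd hx (not_le.mpr (hFlt x h))
  have hqinf : sInf {x : ℝ | α ≤ F x} = q :=
    le_antisymm (csInf_le ⟨q, hlb⟩ hqmem) (le_csInf ⟨q, hqmem⟩ hlb)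
  -- no atom at q
  have hatom : μ {ω | X ω = q} = 0 := by
    have key : ∀ y, y < q → (μ {ω | X ω = q}).toReal ≤ F q - F y := by
      intro y hy
      have hsub : {ω | X ω = q} ⊆ {ω | X ω ≤ q} \ {ω | X ω ≤ y} := by
        intro ω hω
        simp only [Set.mem_setOf_eq] at hω
        exact ⟨le_of_eq hω, by simp only [Set.mem_setOf_eq, hω]; linarith⟩
      have hsub2 : {ω | X ω ≤ y} ⊆ {ω | X ω ≤ q} :=
        fun ω (h : X ω ≤ y) => le_trans h hy.le
      have hdiff : μ ({ω | X ω ≤ q} \ {ω | X ω ≤ y})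
          = μ {ω | X ω ≤ q} - μ {ω | X ω ≤ y} :=
        measure_diff hsub2 (measurableSet_le hX measurable_const).nullMeasurableSet
          (measure_ne_top μ _)
      calc (μ {ω | X ω = q}).toReal
          ≤ (μ ({ω | X ω ≤ q} \ {ω | X ω ≤ y})).toReal :=
            ENNReal.toReal_mono (measure_ne_top μ _) (measure_mono hsub)
        _ = F q - F y := by
            rw [hdiff, ENNReal.toReal_sub_of_le (measure_mono hsub2) (measure_ne_top μ _), hF]
    have h0 : (μ {ω | X ω = q}).toReal ≤ 0 := by
      have htt : Filter.Tendsto (fun y => F q - F y) (nhdsWithin q (Set.Iio q))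
          (nhds (F q - F q)) :=
        Filter.Tendsto.sub tendsto_const_nhds ((hFcont.tendsto q).mono_left nhdsWithin_le_nhds)
      rw [sub_self] at htt
      refine ge_of_tendsto htt ?_
      filter_upwards [self_mem_nhdsWithin] with y hy using key y hy
    have := le_antisymm h0 ENNReal.toReal_nonneg
    rcases (ENNReal.toReal_eq_zero_iff _).mp this with h | h
    · exact h
    · exact absurd h (measure_ne_top μ _)
  have hms : MeasurableSet {ω | q ≤ X ω} := measurableSet_le measurable_const hX
  -- measure of the event
  have hlt : μ {ω | X ω < q} = μ {ω | X ω ≤ q} := by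
    apply le_antisymm (measure_mono fun ω (h : X ω < q) => le_of_lt h)
    calc μ {ω | X ω ≤ q} ≤ μ ({ω | X ω < q} ∪ {ω | X ω = q}) := by
          apply measure_mono
          intro ω (h : X ω ≤ q)
          exact h.lt_or_eq
      _ ≤ μ {ω | X ω < q} + μ {ω | X ω = q} := measure_union_le _ _
      _ = μ {ω | X ω < q} := by rw [hatom, add_zero]
  have hμq : (μ {ω | q ≤ X ω}).toReal = 1 - α := by
    have hset : {ω | q ≤ X ω} = {ω | X ω < q}ᶜ := by
      ext ω; simp [not_lt]
    rw [hset, measure_compl (measurableSet_lt hX measurable_const) (measure_ne_top μ _),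
      measure_univ, hlt,
      ENNReal.toReal_sub_of_le prob_le_one ENNReal.one_ne_top, ENNReal.toReal_one]
    have : (μ {ω | X ω ≤ q}).toReal = α := by rw [← hFq, hF]
    rw [this]
  -- the excess function
  set g : Ω → ℝ := fun ω => max (X ω - q) 0 with hgdef
  have hgnn : 0 ≤ᵐ[μ] g := Filter.Eventually.of_forall fun ω => le_max_right _ _
  have hgm : Measurable g := (hX.sub measurable_const).max measurable_const
  set f : ℝ → ℝ := fun t => p * (A + ξ * t / σ) ^ (-1/ξ) with hfdef
  have hbpos : ∀ t : ℝ, 0 ≤ t → 0 < A + ξ * t / σ := fun t ht =>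
    add_pos_of_pos_of_nonneg hA0 (div_nonneg (mul_nonneg hξ0.le ht) hσ.le)
  -- tail identity
  have htail : ∀ t : ℝ, t ∈ Set.Ioi (0:ℝ) →
      μ {ω | t < g ω} = ENNReal.ofReal (f t) := by
    intro t ht
    have ht : 0 < t := ht
    have hsett : {ω | t < g ω} = {ω | X ω ≤ q + t}ᶜ := by
      ext ω
      simp only [Set.mem_setOf_eq, Set.mem_compl_iff, not_le, hgdef, lt_max_iff]
      constructor
      · rintro (h | h)
        · linarith
        · linarith
      · intro h; left; linarith
    have hqt : u ≤ q + t := by linarith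
    have hbase : 1 + ξ * (q + t - u) / σ = A + ξ * t / σ := by
      rw [← hbaseq]; ring
    have hFqt : F (q + t) = 1 - f t := by
      rw [tail (q + t) hqt, hbase, hfdef]
    have hμle : μ {ω | X ω ≤ q + t} = ENNReal.ofReal (F (q + t)) := by
      rw [hF]
      exact (ENNReal.ofReal_toReal (measure_ne_top μ _)).symm
    rw [hsett, measure_compl (measurableSet_le hX measurable_const) (measure_ne_top μ _),
      measure_univ, hμle]
    have hfnn : 0 ≤ f t := by
      rw [hfdef]
      exact mul_nonneg hp.le (Real.rpow_nonneg (hbpos t ht.le).le _)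
    rw [← ENNReal.ofReal_one, ← ENNReal.ofReal_sub 1 (Fnn (q + t)), hFqt]
    congr 1
    ring
  -- antiderivative
  set c : ℝ := (ξ - 1)/ξ with hcdef
  set G : ℝ → ℝ := fun t => (p * σ / (ξ - 1)) * (A + ξ * t / σ) ^ c with hGdef
  have hξ1' : ξ - 1 ≠ 0 := by intro h; linarith
  have hderiv : ∀ t ∈ Set.Ici (0:ℝ), HasDerivAt G (f t) t := by
    intro t ht
    have h1 : HasDerivAt (fun t : ℝ => A + ξ * t / σ) (ξ / σ) t := by
      have := (((hasDerivAt_id t).const_mul ξ).div_const σ).const_add A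
      simpa using this
    have h2 := h1.rpow_const (p := c) (Or.inl (hbpos t ht).ne')
    have h3 := h2.const_mul (p * σ / (ξ - 1))
    refine h3.congr_deriv ?_
    have hc1 : c - 1 = -1/ξ := by rw [hcdef]; field_simp; ring
    simp only [hfdef, hc1]
    generalize (A + ξ * t / σ) ^ (-1/ξ) = B
    rw [hcdef]
    field_simp
  have hfnn' : ∀ t ∈ Set.Ioi (0:ℝ), 0 ≤ f t := by
    intro t ht
    rw [hfdef]
    exact mul_nonneg hp.le (Real.rpow_nonneg (hbpos t (le_of_lt ht)).le _)
  have hGtend : Filter.Tendsto G Filter.atTop (nhds 0) := by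
    have hbtop : Filter.Tendsto (fun t : ℝ => A + ξ * t / σ) Filter.atTop Filter.atTop := by
      apply Filter.tendsto_atTop_add_const_left
      exact Filter.Tendsto.atTop_div_const hσ (Filter.Tendsto.const_mul_atTop hξ0 Filter.tendsto_id)
    have hrtend : Filter.Tendsto (fun x : ℝ => x ^ c) Filter.atTop (nhds 0) := by
      have hc : c = -((1 - ξ)/ξ) := by rw [hcdef]; ring
      rw [hc]
      exact tendsto_rpow_neg_atTop (by positivity)
    have := (hrtend.comp hbtop).const_mul (p * σ / (ξ - 1))
    simpa using this
  have hIval : ∫ t in Set.Ioi (0:ℝ), f t = p * σ / (1 - ξ) * A / s := by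
    rw [integral_Ioi_of_hasDerivAt_of_nonneg' hderiv hfnn' hGtend]
    have hG0 : G 0 = (p * σ / (ξ - 1)) * A ^ c := by
      rw [hGdef]; norm_num
    rw [hG0]
    have hAc : A ^ c = A / s := by
      rw [hAdef, ← Real.rpow_mul hs0.le, hcdef, show ξ * ((ξ - 1)/ξ) = ξ - 1 by field_simp,
        Real.rpow_sub hs0, Real.rpow_one, ← hAdef]
    rw [hAc]
    field_simp
    ring
  have hIint : IntegrableOn f (Set.Ioi (0:ℝ)) :=
    integrableOn_Ioi_deriv_of_nonneg' hderiv hfnn' hGtend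
  have hInn : 0 ≤ p * σ / (1 - ξ) * A / s := by positivity
  -- layer cake
  have hlayer : ∫⁻ ω, ENNReal.ofReal (g ω) ∂μ
      = ENNReal.ofReal (p * σ / (1 - ξ) * A / s) := by
    rw [lintegral_eq_lintegral_meas_lt μ hgnn hgm.aemeasurable]
    rw [setLIntegral_congr_fun measurableSet_Ioi htail]
    rw [← ofReal_integral_eq_lintegral_ofReal hIint
      ((ae_restrict_iff' measurableSet_Ioi).mpr (Filter.Eventually.of_forall hfnn'))]
    rw [hIval]
  have hgint : Integrable g μ := by
    refine ⟨hgm.aestronglyMeasurable, ?_⟩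
    rw [hasFiniteIntegral_iff_ofReal hgnn, hlayer]
    exact ENNReal.ofReal_lt_top
  have hintg : ∫ ω, g ω ∂μ = p * σ / (1 - ξ) * A / s := by
    rw [integral_eq_lintegral_of_nonneg_ae hgnn hgm.aestronglyMeasurable, hlayer,
      ENNReal.toReal_ofReal hInn]
  -- g as indicator
  have hind : g = Set.indicator {ω | q ≤ X ω} (fun ω => X ω - q) := by
    funext ω
    by_cases h : ω ∈ {ω | q ≤ X ω}
    · rw [Set.indicator_of_mem h]
      simp only [Set.mem_setOf_eq] at h
      exact max_eq_left (by linarith)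
    · rw [Set.indicator_of_notMem h]
      simp only [Set.mem_setOf_eq, not_le] at h
      exact max_eq_right (by linarith)
  have hsetint : ∫ ω in {ω | q ≤ X ω}, (X ω - q) ∂μ = p * σ / (1 - ξ) * A / s := by
    rw [← integral_indicator hms, ← hind, hintg]
  -- integrability on the set
  have hXq_int : IntegrableOn (fun ω => X ω - q) {ω | q ≤ X ω} μ := by
    apply (hgint.integrableOn).congr
    refine (ae_restrict_iff' hms).mpr (Filter.Eventually.of_forall fun ω hω => ?_)
    exact max_eq_left (sub_nonneg.mpr hω)
  have hconst_int : IntegrableOn (fun _ : Ω => q) {ω | q ≤ X ω} μ :=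
    (integrableOn_const_iff).mpr (Or.inr (measure_lt_top μ _))
  -- split
  have hsplit : ∫ ω in {ω | q ≤ X ω}, X ω ∂μ
      = p * σ / (1 - ξ) * A / s + q * (1 - α) := by
    have h1 : ∀ ω : Ω, X ω = (X ω - q) + q := fun ω => by ring
    calc ∫ ω in {ω | q ≤ X ω}, X ω ∂μ
        = ∫ ω in {ω | q ≤ X ω}, ((X ω - q) + q) ∂μ := by
          apply integral_congr_ae
          exact Filter.Eventually.of_forall fun ω => h1 ω
      _ = (∫ ω in {ω | q ≤ X ω}, (X ω - q) ∂μ) + ∫ _ in {ω | q ≤ X ω}, q ∂μ :=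
          integral_add hXq_int hconst_int
      _ = p * σ / (1 - ξ) * A / s + q * (1 - α) := by
          rw [hsetint, setIntegral_const, measureReal_def, hμq, smul_eq_mul]
          ring
  -- finish
  rw [hqinf, hsplit]
  rw [hsdef] at *
  rw [hqdef]
  field_simp
  ring
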